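/- A local tournament D is transitive-free if and only if D is singly connected. -/

import Mathlib

/-- An arc `(x, y)` is a *transitive arc* if there is a directed path from `x` to `y`
avoiding the arc `(x, y)` itself. -/
def IsTransArc {V : Type*} (A : V → V → Prop) (x y : V) : Prop :=
  A x y ∧ ∃ l : List V, l.Nodup ∧
    l.Chain' (fun a b => A a b ∧ ¬(a = x ∧ b = y)) ∧
    l.head? = some x ∧ l.getLast? = some y

/-- A digraph is transitive-free if it has no transitive arc. -/
def TransitiveFree {V : Type*} (A : V → V → Prop) : Prop :=
  ∀ x y : V, ¬ IsTransArc A x y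

/-- A directed path: a nonempty list of distinct vertices consecutively joined by arcs. -/
def IsDipath {V : Type*} (A : V → V → Prop) (l : List V) : Prop :=
  l ≠ [] ∧ l.Nodup ∧ l.Chain' A

/-- A digraph is singly connected if for every ordered pair of vertices there is at
most one directed path from the first to the second. -/
def SinglyConnected {V : Type*} (A : V → V → Prop) : Prop :=
  ∀ u v : V, ∀ p q : List V, IsDipath A p → IsDipath A q →
    p.head? = some u → p.getLast? = some v →
    q.head? = some u → q.getLast? = some v → p = q

/-- A local tournament: a loopless digraph in which, for every vertex `v`, both the
out-neighborhood and the in-neighborhood of `v` induce tournaments. -/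
def IsLocalTournament {V : Type*} (A : V → V → Prop) : Prop :=
  (∀ v, ¬ A v v) ∧
  (∀ v x y : V, A v x → A v y → x ≠ y → (A x y ↔ ¬ A y x)) ∧
  (∀ v x y : V, A x v → A y v → x ≠ y → (A x y ↔ ¬ A y x))

/-- In a digraph whose out-neighborhoods are single-valued (out-degree at most one),
two directed paths with the same first and last vertices coincide. -/
lemma path_unique_of_functional {V : Type*} {A : V → V → Prop}
    (hf : ∀ v x y, A v x → A v y → x = y) :
    ∀ p q : List V, p.Nodup → p.Chain' A → q.Nodup → q.Chain' A →
      p.head? = q.head? → p.getLast? = q.getLast? → p = q := by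
  intro p
  induction p with
  | nil =>
    intro q _ _ _ _ hh _
    cases q with
    | nil => rfl
    | cons b q' => simp at hh
  | cons a p' ih =>
    intro q hpn hpc hqn hqc hh hl
    cases q with
    | nil => simp at hh
    | cons b q' =>
      simp only [List.head?_cons, Option.some.injEq] at hh
      subst hh
      cases p' with
      | nil =>
        cases q' with
        | nil => rfl
        | cons c q'' =>
          exfalso
          rw [List.getLast?_cons_cons] at hl
          simp only [List.getLast?_singleton] at hl
          have hmem : a ∈ c :: q'' := List.mem_of_getLast? hl.symm
          exact (List.nodup_cons.mp hqn).1 hmem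
      | cons c p'' =>
        cases q' with
        | nil =>
          exfalso
          rw [List.getLast?_cons_cons] at hl
          simp only [List.getLast?_singleton] at hl
          have hmem : a ∈ c :: p'' := List.mem_of_getLast? hl
          exact (List.nodup_cons.mp hpn).1 hmem
        | cons d q'' =>
          have hac : A a c := (List.isChain_cons_cons.mp hpc).1
          have had : A a d := (List.isChain_cons_cons.mp hqc).1
          have hcd : c = d := hf a c d hac had
          subst hcd
          have := ih (c :: q'') (List.nodup_cons.mp hpn).2
            (List.isChain_cons_cons.mp hpc).2 (List.nodup_cons.mp hqn).2
            (List.isChain_cons_cons.mp hqc).2 rfl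
            (by rw [List.getLast?_cons_cons, List.getLast?_cons_cons] at hl; exact hl)
          rw [this]

/-- A local tournament is transitive-free iff it is singly connected. -/
theorem localTournament_transitiveFree_iff_singlyConnected
    {V : Type*} (A : V → V → Prop) (hLT : IsLocalTournament A) :
    TransitiveFree A ↔ SinglyConnected A := by
  obtain ⟨hloop, hout, _⟩ := hLT
  constructor
  · -- transitive-free → singly connected
    intro hTF
    -- out-degree at most one
    have hf : ∀ v x y, A v x → A v y → x = y := by
      intro v x y hvx hvy
      by_contra hxy
      have hvx' : v ≠ x := fun h => hloop v (h ▸ hvx)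
      have hvy' : v ≠ y := fun h => hloop v (h ▸ hvy)
      have htri := hout v x y hvx hvy hxy
      by_cases hA : A x y
      · -- transitive arc (v, y) via [v, x, y]
        exact hTF v y ⟨hvy, [v, x, y], by
          simp [List.nodup_cons, hvx', hvy', hxy], by
          refine List.isChain_cons_cons.mpr ⟨⟨hvx, ?_⟩, List.isChain_cons_cons.mpr
            ⟨⟨hA, ?_⟩, List.isChain_singleton _⟩⟩
          · rintro ⟨-, h⟩; exact hxy h
          · rintro ⟨h, -⟩; exact hvx' h.symm, rfl, rfl⟩
      · -- then A y x; transitive arc (v, x) via [v, y, x]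
        have hA' : A y x := not_not.mp (fun h => hA (htri.mpr h))
        exact hTF v x ⟨hvx, [v, y, x], by
          simp [List.nodup_cons, hvx', hvy', Ne.symm hxy], by
          refine List.isChain_cons_cons.mpr ⟨⟨hvy, ?_⟩, List.isChain_cons_cons.mpr
            ⟨⟨hA', ?_⟩, List.isChain_singleton _⟩⟩
          · rintro ⟨-, h⟩; exact hxy h.symm
          · rintro ⟨h, -⟩; exact hvy' h.symm, rfl, rfl⟩
    intro u v p q hp hq hph hpl hqh hql
    exact path_unique_of_functional hf p q hp.2.1 hp.2.2 hq.2.1 hq.2.2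
      (hph.trans hqh.symm) (hpl.trans hql.symm)
  · -- singly connected → transitive-free
    intro hSC x y ⟨hxy, l, hnd, hch, hhd, hlast⟩
    have hxney : x ≠ y := by
      intro h; subst h; exact hloop x hxy
    have hl2 : IsDipath A [x, y] :=
      ⟨by simp, by simp [hxney], List.isChain_cons_cons.mpr ⟨hxy, List.isChain_singleton _⟩⟩
    have hl : IsDipath A l :=
      ⟨by rintro rfl; simp at hhd, hnd, hch.imp (fun _ _ h => h.1)⟩
    have heq : [x, y] = l := hSC x y [x, y] l hl2 hl rfl rfl hhd hlast
    rw [← heq] at hch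
    exact (List.isChain_cons_cons.mp hch).1.2 ⟨rfl, rfl⟩
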